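/- Let σ > 0 and let W_σ be the Lennard-Jones potential. Define A_σ(a) := (1/12) Σ_{j=2}^∞ (j − j³)·W_σ''(a·j) for a > 0. If a/σ > ( 26·(ζ(11) − ζ(13)) / (7·(ζ(5) − ζ(7))) )^{1/6}, where ζ denotes the Riemann zeta function, then A_σ(a) > 0. -/

import Mathlib

open Filter Set Real

/-- The Lennard-Jones potential `W_σ(t) = (σ/t)^12 − (σ/t)^6`. -/
noncomputable def LJ (σ : ℝ) : ℝ → ℝ := fun t => (σ / t) ^ 12 - (σ / t) ^ 6

/-- Riemann zeta function for real `s > 1`: `ζ(s) = ∑_{j=1}^∞ j^{−s}`. -/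
noncomputable def zetaR (s : ℝ) : ℝ := ∑' j : ℕ, ((j : ℝ) + 1) ^ (-s)

/-- `A_σ(a) = (1/12) ∑_{j=2}^∞ (j − j³) W_σ''(aj)`. -/
noncomputable def ALJ (σ : ℝ) (a : ℝ) : ℝ :=
  (1 / 12) * ∑' j : ℕ,
    (((j : ℝ) + 2) - ((j : ℝ) + 2) ^ 3) * deriv (deriv (LJ σ)) (a * ((j : ℝ) + 2))

lemma LJ_eq (σ : ℝ) : LJ σ = fun x : ℝ => σ^12 * x^(-12:ℤ) - σ^6 * x^(-6:ℤ) := by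
  funext x
  simp only [LJ, div_pow, zpow_neg, zpow_ofNat]
  ring

lemma hasDerivAt_LJ (σ x : ℝ) (hx : x ≠ 0) :
    HasDerivAt (LJ σ) (σ^12 * (-12) * x^(-13:ℤ) - σ^6 * (-6) * x^(-7:ℤ)) x := by
  rw [LJ_eq]
  have h1 := (hasDerivAt_zpow (-12) x (Or.inl hx)).const_mul (σ^12)
  have h2 := (hasDerivAt_zpow (-6) x (Or.inl hx)).const_mul (σ^6)
  have := h1.fun_sub h2
  refine this.congr_deriv ?_
  norm_num
  ring

lemma deriv2_LJ (σ x : ℝ) (hx : x ≠ 0) :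
    deriv (deriv (LJ σ)) x = 156 * σ^12 * x^(-14:ℤ) - 42 * σ^6 * x^(-8:ℤ) := by
  have hev : deriv (LJ σ) =ᶠ[nhds x]
      fun y : ℝ => σ^12 * (-12) * y^(-13:ℤ) - σ^6 * (-6) * y^(-7:ℤ) := by
    filter_upwards [isOpen_ne.mem_nhds hx] with y hy
    exact (hasDerivAt_LJ σ y hy).deriv
  rw [hev.deriv_eq]
  have h1 := ((hasDerivAt_zpow (-13) x (Or.inl hx)).const_mul (σ^12 * (-12))).fun_sub
    ((hasDerivAt_zpow (-7) x (Or.inl hx)).const_mul (σ^6 * (-6)))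
  rw [h1.deriv]
  norm_num
  ring

lemma summ1 (k : ℕ) (hk : 1 < k) : Summable (fun j : ℕ => (((j:ℝ)+1)^k)⁻¹) := by
  have := (summable_nat_add_iff (f := fun n : ℕ => 1 / (n:ℝ)^k) 1).mpr
    (summable_one_div_nat_pow.mpr hk)
  simpa [one_div, add_comm] using this

lemma summ2 (k : ℕ) (hk : 1 < k) : Summable (fun j : ℕ => (((j:ℝ)+2)^k)⁻¹) := by
  have := (summable_nat_add_iff (f := fun n : ℕ => 1 / (n:ℝ)^k) 2).mpr
    (summable_one_div_nat_pow.mpr hk)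
  simpa [one_div, add_comm] using this

lemma zetaR_nat (k : ℕ) : zetaR k = ∑' j : ℕ, (((j:ℝ)+1)^k)⁻¹ := by
  unfold zetaR
  congr 1
  funext j
  rw [Real.rpow_neg (by positivity), Real.rpow_natCast]

lemma tsum2 (k : ℕ) (hk : 1 < k) :
    ∑' j : ℕ, (((j:ℝ)+2)^k)⁻¹ = zetaR k - 1 := by
  rw [zetaR_nat]
  have h := Summable.tsum_eq_zero_add (summ1 k hk)
  have h0 : (((0:ℕ):ℝ)+1)^k = 1 := by norm_num
  rw [h0] at h
  push_cast at h ⊢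
  rw [h]
  ring_nf

lemma zdiff (k l : ℕ) (hk : 1 < k) (hkl : k < l) : 0 < zetaR k - zetaR l := by
  rw [zetaR_nat, zetaR_nat,
    ← Summable.tsum_sub (summ1 k hk) (summ1 l (hk.trans hkl))]
  refine Summable.tsum_pos ((summ1 k hk).sub (summ1 l (hk.trans hkl))) (fun j => ?_) 1 ?_
  · have h1 : (1:ℝ) ≤ (j:ℝ)+1 := by have : (0:ℝ) ≤ (j:ℝ) := Nat.cast_nonneg j; linarith
    have := pow_le_pow_right₀ h1 hkl.le
    have hp : (0:ℝ) < ((j:ℝ)+1)^k := by positivity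
    simp only [sub_nonneg]
    exact inv_anti₀ hp this
  · have h2 : ((1:ℕ):ℝ)+1 = 2 := by norm_num
    rw [h2]
    have : (2:ℝ)^k < 2^l := by
      exact pow_lt_pow_right₀ (by norm_num) hkl
    have hp : (0:ℝ) < (2:ℝ)^k := by positivity
    simp only [sub_pos]
    exact inv_strictAnti₀ hp this

/-- if `a/σ > (26(ζ(11)−ζ(13))/(7(ζ(5)−ζ(7))))^{1/6}`
then `A_σ(a) > 0`. -/
theorem stmt14 (σ a : ℝ) (hσ : 0 < σ)
    (h : (26 * (zetaR 11 - zetaR 13) / (7 * (zetaR 5 - zetaR 7))) ^ ((1 : ℝ) / 6)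
          < a / σ) :
    0 < ALJ σ a := by
  have hZ1 : 0 < zetaR 5 - zetaR 7 := by
    have := zdiff 5 7 (by norm_num) (by norm_num); push_cast at this ⊢; linarith
  have hZ2 : 0 < zetaR 11 - zetaR 13 := by
    have := zdiff 11 13 (by norm_num) (by norm_num); push_cast at this ⊢; linarith
  set Z1 := zetaR 5 - zetaR 7
  set Z2 := zetaR 11 - zetaR 13
  set X := 26 * Z2 / (7 * Z1) with hXdef
  have hX : 0 < X := by positivity
  have hrpow : (0:ℝ) ≤ X ^ ((1:ℝ)/6) := Real.rpow_nonneg hX.le _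
  have haσ : 0 < a / σ := lt_of_le_of_lt hrpow h
  have ha : 0 < a := by
    have := mul_pos haσ hσ; rwa [div_mul_cancel₀ a hσ.ne'] at this
  -- (a/σ)^6 > X
  have hpow6 : X < (a/σ)^6 := by
    have h6 : (X ^ ((1:ℝ)/6))^(6:ℕ) = X := by
      rw [← Real.rpow_natCast (X ^ ((1:ℝ)/6)) 6, ← Real.rpow_mul hX.le]
      norm_num
    calc X = (X ^ ((1:ℝ)/6))^(6:ℕ) := h6.symm
    _ < (a/σ)^6 := by exact pow_lt_pow_left₀ h hrpow (by norm_num)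
  -- key polynomial inequality
  have hkey : 26 * Z2 * σ^6 < 7 * Z1 * a^6 := by
    rw [hXdef, div_lt_iff₀ (by positivity), div_pow, div_mul_eq_mul_div,
      lt_div_iff₀ (by positivity)] at hpow6
    nlinarith [pow_pos hσ 6, pow_pos ha 6]
  -- compute ALJ
  have hA : ALJ σ a = (1/12) * (156 * σ^12 / a^14 * (zetaR 13 - zetaR 11)
      - 42 * σ^6 / a^8 * (zetaR 7 - zetaR 5)) := by
    unfold ALJ
    congr 1
    have hterm : ∀ j : ℕ,
        (((j : ℝ) + 2) - ((j : ℝ) + 2) ^ 3) * deriv (deriv (LJ σ)) (a * ((j : ℝ) + 2))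
        = 156 * σ^12 / a^14 * ((((j:ℝ)+2)^13)⁻¹ - (((j:ℝ)+2)^11)⁻¹)
          - 42 * σ^6 / a^8 * ((((j:ℝ)+2)^7)⁻¹ - (((j:ℝ)+2)^5)⁻¹) := by
      intro j
      have hn : (0:ℝ) < (j:ℝ) + 2 := by positivity
      rw [deriv2_LJ σ _ (by positivity)]
      have h14 : (a * ((j:ℝ)+2))^(-14:ℤ) = (a^14 * ((j:ℝ)+2)^14)⁻¹ := by
        rw [zpow_neg, show ((14:ℤ)) = ((14:ℕ):ℤ) from rfl, zpow_natCast, mul_pow]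
      have h8 : (a * ((j:ℝ)+2))^(-8:ℤ) = (a^8 * ((j:ℝ)+2)^8)⁻¹ := by
        rw [zpow_neg, show ((8:ℤ)) = ((8:ℕ):ℤ) from rfl, zpow_natCast, mul_pow]
      rw [h14, h8]
      field_simp
    rw [tsum_congr hterm]
    have s13 := summ2 13 (by norm_num)
    have s11 := summ2 11 (by norm_num)
    have s7 := summ2 7 (by norm_num)
    have s5 := summ2 5 (by norm_num)
    rw [Summable.tsum_sub ((s13.sub s11).mul_left _) ((s7.sub s5).mul_left _),
      tsum_mul_left, tsum_mul_left, Summable.tsum_sub s13 s11, Summable.tsum_sub s7 s5,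
      tsum2 13 (by norm_num), tsum2 11 (by norm_num),
      tsum2 7 (by norm_num), tsum2 5 (by norm_num)]
    push_cast
    ring
  rw [hA]
  have hz13 : zetaR 13 - zetaR 11 = -Z2 := by simp [Z2]
  have hz7 : zetaR 7 - zetaR 5 = -Z1 := by simp [Z1]
  rw [hz13, hz7]
  have ha14 : (0:ℝ) < a^14 := pow_pos ha 14
  have hexpand : (1/12) * (156 * σ^12 / a^14 * (-Z2) - 42 * σ^6 / a^8 * (-Z1))
      = (σ^6 / (2 * a^14)) * (7 * Z1 * a^6 - 26 * Z2 * σ^6) := by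
    field_simp
    ring
  rw [hexpand]
  apply mul_pos (by positivity)
  linarith
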